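/- Fix r ≥ 1 and define the split graph Gʳ on vertex set Q ⊎ (I × {1,…,r}) as follows: Q is a clique in Gʳ, the set I × {1,…,r} is independent in Gʳ, and (i,s) is adjacent in Gʳ to q ∈ Q if and only if i is adjacent to q in G. Then the number of dominating sets of Gʳ equals Σ_{S ⊆ Q} 2^{r·|N(S) ∩ I|} = Σ_{S ⊆ Q} (2^r)^{|N(S) ∩ I|}. (The generalization giving Equation (2) of the paper.) -/

import Mathlib

/-- `D` is a dominating set of `G`: every vertex not in `D` is adjacent to a vertex of `D`. -/
def Dominating {α : Type*} (G : SimpleGraph α) (D : Finset α) : Prop :=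
  ∀ v, v ∉ D → ∃ d ∈ D, G.Adj d v

/-- The graph `Gʳ` on vertex set `Q ⊎ (I × {1,…,r})`: `Q` is a clique, `I × {1,…,r}` is
independent, and `(i,s)` is adjacent to `q ∈ Q` iff `i` is adjacent to `q` in `G`. -/
def Gr {V : Type*} (G : SimpleGraph V) (Q I : Finset V) (r : ℕ) :
    SimpleGraph ({q : V // q ∈ Q} ⊕ ({i : V // i ∈ I} × Fin r)) :=
  SimpleGraph.fromRel (fun x y =>
    match x, y with
    | Sum.inl _, Sum.inl _ => True
    | Sum.inl q, Sum.inr (i, _) => G.Adj q.1 i.1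
    | Sum.inr _, Sum.inl _ => False
    | Sum.inr _, Sum.inr _ => False)

section lemmas
variable {V : Type*} (G : SimpleGraph V) (Q I : Finset V) (r : ℕ)

lemma Gr_adj_inl_inl (a b : {q : V // q ∈ Q}) :
    (Gr G Q I r).Adj (Sum.inl a) (Sum.inl b) ↔ a ≠ b := by
  simp [Gr, SimpleGraph.fromRel_adj]

lemma Gr_adj_inl_inr (a : {q : V // q ∈ Q}) (i : {i : V // i ∈ I}) (s : Fin r) :
    (Gr G Q I r).Adj (Sum.inl a) (Sum.inr (i, s)) ↔ G.Adj a.1 i.1 := by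
  simp [Gr, SimpleGraph.fromRel_adj]

lemma Gr_adj_inr_inl (a : {q : V // q ∈ Q}) (i : {i : V // i ∈ I}) (s : Fin r) :
    (Gr G Q I r).Adj (Sum.inr (i, s)) (Sum.inl a) ↔ G.Adj a.1 i.1 := by
  simp [Gr, SimpleGraph.fromRel_adj]

lemma Gr_not_adj_inr_inr (p p' : {i : V // i ∈ I} × Fin r) :
    ¬ (Gr G Q I r).Adj (Sum.inr p) (Sum.inr p') := by
  simp [Gr, SimpleGraph.fromRel_adj]

end lemmas

lemma dominating_Gr_iff {V : Type*} (G : SimpleGraph V) (Q I : Finset V) (r : ℕ) (hr : 1 ≤ r)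
    (hnbr : ∀ q ∈ Q, ∃ i ∈ I, G.Adj q i)
    (D : Finset ({q : V // q ∈ Q} ⊕ ({i : V // i ∈ I} × Fin r))) :
    Dominating (Gr G Q I r) D ↔
      ∀ (i : {i : V // i ∈ I}) (s : Fin r),
        (∀ q : {q : V // q ∈ Q}, Sum.inl q ∈ D → ¬ G.Adj q.1 i.1) → Sum.inr (i, s) ∈ D := by
  constructor
  · intro hD i s h
    by_contra hni
    obtain ⟨d, hd, hadj⟩ := hD _ hni
    match d with
    | Sum.inl q =>
      exact h q hd ((Gr_adj_inl_inr G Q I r q i s).mp hadj)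
    | Sum.inr p =>
      exact Gr_not_adj_inr_inr G Q I r p (i, s) hadj
  · intro h v hv
    match v with
    | Sum.inl q =>
      by_cases hA : ∃ q' : {q : V // q ∈ Q}, Sum.inl q' ∈ D
      · obtain ⟨q', hq'⟩ := hA
        refine ⟨Sum.inl q', hq', (Gr_adj_inl_inl G Q I r q' q).mpr ?_⟩
        rintro rfl; exact hv hq'
      · push_neg at hA
        obtain ⟨i, hi, hadj⟩ := hnbr q.1 q.2
        refine ⟨Sum.inr (⟨i, hi⟩, ⟨0, hr⟩), h ⟨i, hi⟩ ⟨0, hr⟩ (fun q' hq' => absurd hq' (hA q')), ?_⟩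
        exact (Gr_adj_inr_inl G Q I r q ⟨i, hi⟩ ⟨0, hr⟩).mpr hadj
    | Sum.inr (i, s) =>
      by_cases hA : ∃ q : {q : V // q ∈ Q}, Sum.inl q ∈ D ∧ G.Adj q.1 i.1
      · obtain ⟨q, hq, hadj⟩ := hA
        exact ⟨Sum.inl q, hq, (Gr_adj_inl_inr G Q I r q i s).mpr hadj⟩
      · push_neg at hA
        exact absurd (h i s hA) hv

open Finset in
open Classical in
lemma fiber_card {V : Type*} [Fintype V] [DecidableEq V]
    (G : SimpleGraph V) (Q I : Finset V) (r : ℕ) (hr : 1 ≤ r)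
    (hnbr : ∀ q ∈ Q, ∃ i ∈ I, G.Adj q i) (S : Finset V) (hS : S ⊆ Q) :
    (Finset.univ.filter (fun D : Finset ({q : V // q ∈ Q} ⊕ ({i : V // i ∈ I} × Fin r)) =>
        Dominating (Gr G Q I r) D ∧
          ∀ q : {q : V // q ∈ Q}, (Sum.inl q ∈ D ↔ q.1 ∈ S))).card
      = 2 ^ (r * ({w : V | w ∈ I ∧ ∃ s ∈ S, G.Adj s w}).ncard) := by
  classical
  set QS : Finset {q : V // q ∈ Q} := univ.filter (fun q => q.1 ∈ S) with hQS
  set NS : Finset {i : V // i ∈ I} := univ.filter (fun i => ∃ w ∈ S, G.Adj w i.1) with hNS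
  set NSc : Finset {i : V // i ∈ I} := univ.filter (fun i => ¬ ∃ w ∈ S, G.Adj w i.1) with hNSc
  set base : Finset ({q : V // q ∈ Q} ⊕ ({i : V // i ∈ I} × Fin r)) :=
    QS.image Sum.inl ∪ (NSc ×ˢ univ).image Sum.inr with hbase
  set top : Finset ({q : V // q ∈ Q} ⊕ ({i : V // i ∈ I} × Fin r)) :=
    QS.image Sum.inl ∪ (univ : Finset ({i : V // i ∈ I} × Fin r)).image Sum.inr with htop
  have hsub : base ⊆ top :=
    Finset.union_subset_union_right (Finset.image_subset_image (Finset.subset_univ _))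
  have hIcc : (Finset.univ.filter (fun D : Finset ({q : V // q ∈ Q} ⊕ ({i : V // i ∈ I} × Fin r)) =>
        Dominating (Gr G Q I r) D ∧
          ∀ q : {q : V // q ∈ Q}, (Sum.inl q ∈ D ↔ q.1 ∈ S))) = Finset.Icc base top := by
    ext D
    simp only [mem_filter, mem_univ, true_and, Finset.mem_Icc]
    constructor
    · rintro ⟨hdom, hproj⟩
      constructor
      · intro x hx
        rcases Finset.mem_union.mp hx with hx | hx
        · obtain ⟨q, hq, rfl⟩ := Finset.mem_image.mp hx
          exact (hproj q).mpr ((Finset.mem_filter.mp hq).2)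
        · obtain ⟨⟨i, s⟩, hp, rfl⟩ := Finset.mem_image.mp hx
          have hi : ¬ ∃ w ∈ S, G.Adj w i.1 :=
            (Finset.mem_filter.mp (Finset.mem_product.mp hp).1).2
          refine (dominating_Gr_iff G Q I r hr hnbr D).mp hdom i s (fun q' hq' hadj => ?_)
          exact hi ⟨q'.1, (hproj q').mp hq', hadj⟩
      · intro x hx
        match x with
        | Sum.inl q =>
          exact Finset.mem_union_left _ (Finset.mem_image_of_mem _
            (Finset.mem_filter.mpr ⟨Finset.mem_univ _, (hproj q).mp hx⟩))
        | Sum.inr p =>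
          exact Finset.mem_union_right _ (Finset.mem_image_of_mem _ (Finset.mem_univ _))
    · rintro ⟨hbaseD, hDtop⟩
      have hproj : ∀ q : {q : V // q ∈ Q}, (Sum.inl q ∈ D ↔ q.1 ∈ S) := by
        intro q
        constructor
        · intro hq
          rcases Finset.mem_union.mp (hDtop hq) with hx | hx
          · obtain ⟨q', hq', heq⟩ := Finset.mem_image.mp hx
            cases Sum.inl.inj heq
            exact (Finset.mem_filter.mp hq').2
          · obtain ⟨p, _, heq⟩ := Finset.mem_image.mp hx
            exact absurd heq (by simp)
        · intro hq
          exact hbaseD (Finset.mem_union_left _ (Finset.mem_image_of_mem _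
            (Finset.mem_filter.mpr ⟨Finset.mem_univ _, hq⟩)))
      refine ⟨(dominating_Gr_iff G Q I r hr hnbr D).mpr ?_, hproj⟩
      intro i s h
      have hi : i ∈ NSc := by
        rw [hNSc, Finset.mem_filter]
        refine ⟨Finset.mem_univ _, ?_⟩
        rintro ⟨w, hw, hadj⟩
        exact h ⟨w, hS hw⟩ ((hproj ⟨w, hS hw⟩).mpr hw) hadj
      exact hbaseD (Finset.mem_union_right _ (Finset.mem_image_of_mem _
        (Finset.mem_product.mpr ⟨hi, Finset.mem_univ _⟩)))
  rw [hIcc, Finset.card_Icc_finset hsub]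
  have hdisj1 : ∀ X : Finset ({i : V // i ∈ I} × Fin r),
      Disjoint (QS.image Sum.inl) (X.image (Sum.inr : _ → ({q : V // q ∈ Q} ⊕ _))) := by
    intro X
    simp only [Finset.disjoint_left, Finset.mem_image]
    rintro a ⟨q, _, rfl⟩ ⟨p, _, h⟩
    exact absurd h (by simp)
  have hcards : ∀ X : Finset ({i : V // i ∈ I} × Fin r),
      (QS.image Sum.inl ∪ X.image Sum.inr).card = QS.card + X.card := by
    intro X
    rw [Finset.card_union_of_disjoint (hdisj1 X),
      Finset.card_image_of_injective _ Sum.inl_injective,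
      Finset.card_image_of_injective _ Sum.inr_injective]
  have hNcard : NS.card = ({w : V | w ∈ I ∧ ∃ s ∈ S, G.Adj s w}).ncard := by
    have hset : {w : V | w ∈ I ∧ ∃ s ∈ S, G.Adj s w}
        = ↑(I.filter (fun w => ∃ s ∈ S, G.Adj s w)) := by
      ext w; simp
    rw [hset, Set.ncard_coe_finset]
    refine Finset.card_bij (fun i _ => i.1) ?_ ?_ ?_
    · intro i hi
      exact Finset.mem_filter.mpr ⟨i.2, (Finset.mem_filter.mp hi).2⟩
    · intro a ha b hb hab
      exact Subtype.ext hab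
    · intro w hw
      obtain ⟨hwI, hwp⟩ := Finset.mem_filter.mp hw
      exact ⟨⟨w, hwI⟩, Finset.mem_filter.mpr ⟨Finset.mem_univ _, hwp⟩, rfl⟩
  have hcompl : NSc.card = Fintype.card {i : V // i ∈ I} - NS.card := by
    have h1 : NSc = NSᶜ := by
      ext i; simp [hNS, hNSc]
    rw [h1, Finset.card_compl]
  have hNle : NS.card ≤ Fintype.card {i : V // i ∈ I} := by
    simpa [hNS] using Finset.card_filter_le (univ : Finset {i : V // i ∈ I}) _
  rw [hbase, htop, hcards, hcards, Finset.card_product, hcompl]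
  simp only [Finset.card_univ, Fintype.card_prod, Fintype.card_fin]
  rw [← hNcard]
  congr 1
  have : (Fintype.card {i : V // i ∈ I} - NS.card) * r
      ≤ Fintype.card {i : V // i ∈ I} * r := Nat.mul_le_mul_right _ (Nat.sub_le _ _)
  rw [Nat.add_sub_add_left]
  rw [← Nat.sub_mul, Nat.sub_sub_self hNle, Nat.mul_comm]


/-- Equation (2): for a split graph `G` with clique `Q` and independent set `I` in which every
vertex of `Q` has a neighbor in `I`, and for `r ≥ 1`, the number of dominating sets of `Gʳ` is
`Σ_{S ⊆ Q} 2^{r·|N(S) ∩ I|} = Σ_{S ⊆ Q} (2^r)^{|N(S) ∩ I|}`. -/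
theorem count_dominating_Gr {V : Type*} [Fintype V] [DecidableEq V]
    (G : SimpleGraph V) (Q I : Finset V)
    (hdisj : Disjoint Q I) (huniv : Q ∪ I = Finset.univ)
    (hQ : G.IsClique (Q : Set V)) (hI : ∀ a ∈ I, ∀ b ∈ I, ¬ G.Adj a b)
    (hnbr : ∀ q ∈ Q, ∃ i ∈ I, G.Adj q i)
    (r : ℕ) (hr : 1 ≤ r) :
    {D : Finset ({q : V // q ∈ Q} ⊕ ({i : V // i ∈ I} × Fin r)) |
        Dominating (Gr G Q I r) D}.ncard =
      ∑ S ∈ Q.powerset, 2 ^ (r * ({w : V | w ∈ I ∧ ∃ s ∈ S, G.Adj s w}).ncard) ∧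
    {D : Finset ({q : V // q ∈ Q} ⊕ ({i : V // i ∈ I} × Fin r)) |
        Dominating (Gr G Q I r) D}.ncard =
      ∑ S ∈ Q.powerset, (2 ^ r) ^ ({w : V | w ∈ I ∧ ∃ s ∈ S, G.Adj s w}).ncard := by
  classical
  have key : {D : Finset ({q : V // q ∈ Q} ⊕ ({i : V // i ∈ I} × Fin r)) |
        Dominating (Gr G Q I r) D}.ncard =
      ∑ S ∈ Q.powerset, 2 ^ (r * ({w : V | w ∈ I ∧ ∃ s ∈ S, G.Adj s w}).ncard) := by
    have h1 : {D : Finset ({q : V // q ∈ Q} ⊕ ({i : V // i ∈ I} × Fin r)) |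
          Dominating (Gr G Q I r) D}.ncard
        = (Finset.univ.filter (fun D => Dominating (Gr G Q I r) D)).card := by
      rw [← Set.ncard_coe_finset]
      congr 1
      ext D
      simp
    rw [h1]
    set f : Finset ({q : V // q ∈ Q} ⊕ ({i : V // i ∈ I} × Fin r)) → Finset V :=
      fun D => Q.filter (fun w => ∃ h : w ∈ Q, Sum.inl ⟨w, h⟩ ∈ D) with hf
    rw [Finset.card_eq_sum_card_fiberwise (f := f) (t := Q.powerset)
      (fun D _ => Finset.mem_powerset.mpr (Finset.filter_subset _ _))]
    refine Finset.sum_congr rfl (fun S hS => ?_)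
    have hSQ : S ⊆ Q := Finset.mem_powerset.mp hS
    rw [← fiber_card G Q I r hr hnbr S hSQ]
    rw [Finset.filter_filter]
    congr 1
    apply Finset.filter_congr
    intro D _
    have hfiff : f D = S ↔ ∀ q : {q : V // q ∈ Q}, (Sum.inl q ∈ D ↔ q.1 ∈ S) := by
      constructor
      · intro hfD q
        constructor
        · intro hq
          have hmem : q.1 ∈ f D := Finset.mem_filter.mpr ⟨q.2, ⟨q.2, by simpa using hq⟩⟩
          rw [hfD] at hmem
          exact hmem
        · intro hq
          rw [← hfD] at hq
          obtain ⟨_, h, hD⟩ := Finset.mem_filter.mp hq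
          simpa using hD
      · intro h
        ext w
        simp only [hf, Finset.mem_filter]
        constructor
        · rintro ⟨hwQ, hw, hD⟩
          exact (h ⟨w, hw⟩).mp hD
        · intro hwS
          exact ⟨hSQ hwS, hSQ hwS, (h ⟨w, hSQ hwS⟩).mpr hwS⟩
    rw [and_congr_right_iff]
    exact fun _ => hfiff
  refine ⟨key, ?_⟩
  rw [key]
  exact Finset.sum_congr rfl (fun S _ => by rw [pow_mul])
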